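/- Let M be a commutative monoid equipped with a weak decomposition order that satisfies power cancellation, and suppose every element of M has a decomposition into indecomposables. Then M has unique decomposition: every element has exactly one decomposition (multiset of indecomposables) up to multiset equality. -/

import Mathlib

/-- Indecomposable element of a commutative monoid. -/
def Indec {M : Type*} [CommMonoid M] (p : M) : Prop :=
  p ≠ 1 ∧ ∀ x y : M, p = x * y → x = 1 ∨ y = 1

/-- A decomposition of m: a finite multiset of indecomposables with product m. -/
def IsDecomp {M : Type*} [CommMonoid M] (d : Multiset M) (m : M) : Prop :=
  (∀ p ∈ d, Indec p) ∧ d.prod = m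

/-- Let M be a commutative monoid equipped with a weak decomposition order
(well-founded, identity least, compatible, precompositional, Archimedean) that
satisfies power cancellation, and suppose every element has a decomposition.
Then M has unique decomposition. -/
theorem unique_decomposition {M : Type*} [CommMonoid M] [PartialOrder M]
    (hwf : WellFounded ((· < ·) : M → M → Prop))
    (hbot : ∀ x : M, (1 : M) ≤ x)
    (hcomp : ∀ x y z : M, x ≤ y → x * z ≤ y * z)
    (hpre : ∀ x y z : M, x ≤ y * z → ∃ y' z', x = y' * z' ∧ y' ≤ y ∧ z' ≤ z)
    (harch : ∀ x y : M, (∀ n : ℕ, x ^ n ≤ y) → x = 1)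
    (hpc : ∀ x y p : M, Indec p → ¬ p < x → ¬ p < y →
      ∀ k : ℕ, p ^ k * x = p ^ k * y → x = y)
    (hex : ∀ m : M, ∃ d : Multiset M, IsDecomp d m) :
    ∀ m : M, ∃! d : Multiset M, IsDecomp d m := by
  classical
  -- x ≤ y * x
  have hle_mul' : ∀ x y : M, x ≤ y * x := by
    intro x y
    have h := hcomp 1 y x (hbot y)
    simpa using h
  -- x ≤ x * y
  have hle_mul : ∀ x y : M, x ≤ x * y := by
    intro x y
    rw [mul_comm]
    exact hle_mul' x y
  -- if a product is 1, each factor is 1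
  have heq_one : ∀ x y : M, x * y = 1 → x = 1 := by
    intro x y h
    exact le_antisymm (h ▸ hle_mul x y) (hbot x)
  -- a decomposition of 1 is empty
  have hprod_one : ∀ d : Multiset M, (∀ q ∈ d, Indec q) → d.prod = 1 → d = 0 := by
    intro d
    induction d using Multiset.induction_on with
    | empty => intro _ _; rfl
    | cons q t ih =>
      intro hq hprod
      rw [Multiset.prod_cons] at hprod
      exact absurd (heq_one q t.prod hprod) (hq q (Multiset.mem_cons_self q t)).1
  -- indecomposables are prime w.r.t. the order
  have hprime : ∀ p x y : M, Indec p → p ≤ x * y → p ≤ x ∨ p ≤ y := by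
    intro p x y hp h
    obtain ⟨u, v, huv, hu, hv⟩ := hpre p x y h
    rcases hp.2 u v huv with h1 | h1
    · right; rw [huv, h1, one_mul]; exact hv
    · left; rw [huv, h1, mul_one]; exact hu
  -- an indecomposable below a product is below some factor
  have hmem_le : ∀ (p : M) (d : Multiset M), Indec p → p ≤ d.prod → ∃ q ∈ d, p ≤ q := by
    intro p d hp
    induction d using Multiset.induction_on with
    | empty =>
      intro h
      rw [Multiset.prod_zero] at h
      exact absurd (le_antisymm h (hbot p)) hp.1
    | cons q t ih =>
      intro h
      rw [Multiset.prod_cons] at h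
      rcases hprime p q t.prod hp h with h1 | h1
      · exact ⟨q, Multiset.mem_cons_self q t, h1⟩
      · obtain ⟨r, hr, hpr⟩ := ih h1
        exact ⟨r, Multiset.mem_cons_of_mem hr, hpr⟩
  -- powers are monotone
  have hpow_mono : ∀ (p : M) (i j : ℕ), i ≤ j → p ^ i ≤ p ^ j := by
    intro p i j hij
    calc p ^ i ≤ p ^ i * p ^ (j - i) := hle_mul _ _
      _ = p ^ j := by rw [← pow_add]; congr 1; omega
  -- p^2 ≤ p is impossible for p ≠ 1
  have hsq : ∀ p : M, p ≠ 1 → p ^ 2 ≤ p → False := by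
    intro p hp h
    have hn : ∀ n : ℕ, p ^ n ≤ p := by
      intro n
      induction n with
      | zero => simpa using hbot p
      | succ n ih =>
        calc p ^ (n + 1) = p ^ n * p := by rw [pow_succ]
          _ ≤ p * p := hcomp _ _ _ ih
          _ = p ^ 2 := by rw [pow_two]
          _ ≤ p := h
    exact hp (harch p p hn)
  -- products of submultisets are below
  have hprod_mono : ∀ s t : Multiset M, s ≤ t → s.prod ≤ t.prod := by
    intro s t h
    obtain ⟨u, rfl⟩ := Multiset.le_iff_exists_add.mp h
    rw [Multiset.prod_add]
    exact hle_mul _ _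
  -- main statement: uniqueness, by well-founded induction
  have main : ∀ m : M, ∀ d e : Multiset M, IsDecomp d m → IsDecomp e m → d = e := by
    intro m
    refine hwf.induction (C := fun m => ∀ d e : Multiset M,
      IsDecomp d m → IsDecomp e m → d = e) m ?_
    clear m
    intro m IH d e hd he
    by_cases hm1 : m = 1
    · rw [hprod_one d hd.1 (hd.2.trans hm1), hprod_one e he.1 (he.2.trans hm1)]
    -- Lemma A: products equal to a power p^n < m split into powers
    have A : ∀ (p u v : M) (n : ℕ), Indec p → u * v = p ^ n → p ^ n < m →
        ∃ i j : ℕ, i + j = n ∧ u = p ^ i ∧ v = p ^ j := by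
      intro p u v n hp huv hlt
      obtain ⟨D1, hD1⟩ := hex u
      obtain ⟨D2, hD2⟩ := hex v
      have hDd : IsDecomp (D1 + D2) (p ^ n) := by
        constructor
        · intro q hq
          rcases Multiset.mem_add.mp hq with h | h
          exacts [hD1.1 q h, hD2.1 q h]
        · rw [Multiset.prod_add, hD1.2, hD2.2, huv]
      have hrep : IsDecomp (Multiset.replicate n p) (p ^ n) := by
        constructor
        · intro q hq
          rw [Multiset.eq_of_mem_replicate hq]
          exact hp
        · exact Multiset.prod_replicate n p
      have heq := IH (p ^ n) hlt (D1 + D2) (Multiset.replicate n p) hDd hrep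
      have h1 : D1 = Multiset.replicate (Multiset.card D1) p := by
        rw [Multiset.eq_replicate_card]
        intro b hb
        have hb' : b ∈ Multiset.replicate n p := heq ▸ Multiset.mem_add.mpr (Or.inl hb)
        exact Multiset.eq_of_mem_replicate hb'
      have h2 : D2 = Multiset.replicate (Multiset.card D2) p := by
        rw [Multiset.eq_replicate_card]
        intro b hb
        have hb' : b ∈ Multiset.replicate n p := heq ▸ Multiset.mem_add.mpr (Or.inr hb)
        exact Multiset.eq_of_mem_replicate hb'
      refine ⟨Multiset.card D1, Multiset.card D2, ?_, ?_, ?_⟩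
      · have hc := congrArg Multiset.card heq
        simpa using hc
      · calc u = D1.prod := hD1.2.symm
          _ = (Multiset.replicate (Multiset.card D1) p).prod := by rw [← h1]
          _ = p ^ Multiset.card D1 := Multiset.prod_replicate _ _
      · calc v = D2.prod := hD2.2.symm
          _ = (Multiset.replicate (Multiset.card D2) p).prod := by rw [← h2]
          _ = p ^ Multiset.card D2 := Multiset.prod_replicate _ _
    -- Lemma K: counting powers of a locally maximal indecomposable
    have K : ∀ (p : M), Indec p → ∀ (f : Multiset M), (∀ q ∈ f, Indec q) →
        (∀ q ∈ f, ¬ p < q) → ∀ k : ℕ, p ^ k ≤ f.prod → p ^ k < m → k ≤ f.count p := by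
      intro p hp f
      induction f using Multiset.induction_on with
      | empty =>
        intro _ _ k hk _
        cases k with
        | zero => simp
        | succ k =>
          exfalso
          rw [Multiset.prod_zero] at hk
          have h1 : p ^ (k + 1) = 1 := le_antisymm hk (hbot _)
          have hp1 : p ≤ 1 := by
            calc p = p ^ 1 := (pow_one p).symm
              _ ≤ p ^ (k + 1) := hpow_mono p 1 (k + 1) (by omega)
              _ = 1 := h1
          exact hp.1 (le_antisymm hp1 (hbot p))
      | cons q t ih =>
        intro hind hnlt k hk hkm
        rw [Multiset.prod_cons] at hk
        obtain ⟨u, v, huv, hu, hv⟩ := hpre (p ^ k) q t.prod hk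
        obtain ⟨i, j, hij, hui, hvj⟩ := A p u v k hp huv.symm hkm
        rcases Nat.eq_zero_or_pos i with hi0 | hi1
        · -- i = 0, so j = k and the whole power sits below t.prod
          have hjk : j = k := by omega
          subst hjk
          rw [hvj] at hv
          have hrec := ih (fun r hr => hind r (Multiset.mem_cons_of_mem hr))
            (fun r hr => hnlt r (Multiset.mem_cons_of_mem hr)) j hv hkm
          calc j ≤ t.count p := hrec
            _ ≤ (q ::ₘ t).count p := Multiset.count_le_of_le p (Multiset.le_cons_self t q)
        · -- i ≥ 1 : then q = p and i = 1
          have hpq : p ≤ q := by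
            calc p = p ^ 1 := (pow_one p).symm
              _ ≤ p ^ i := hpow_mono p 1 i hi1
              _ = u := hui.symm
              _ ≤ q := hu
          have hqp : p = q := by
            by_contra hne
            exact hnlt q (Multiset.mem_cons_self q t) (lt_of_le_of_ne hpq hne)
          have hi1' : i = 1 := by
            by_contra hne
            have h2i : 2 ≤ i := by omega
            refine hsq p hp.1 ?_
            calc p ^ 2 ≤ p ^ i := hpow_mono p 2 i h2i
              _ = u := hui.symm
              _ ≤ q := hu
              _ = p := hqp.symm
          have hjk : k = j + 1 := by omega
          rw [hvj] at hv
          have hjm : p ^ j < m := lt_of_le_of_lt (hpow_mono p j k (by omega)) hkm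
          have hrec := ih (fun r hr => hind r (Multiset.mem_cons_of_mem hr))
            (fun r hr => hnlt r (Multiset.mem_cons_of_mem hr)) j hv hjm
          have hcount : (q ::ₘ t).count p = t.count p + 1 := by
            simp [Multiset.count_cons, hqp]
          omega
    -- m ≠ 1: choose a maximal indecomposable p occurring in d + e
    have hd0 : d ≠ 0 := by
      intro h
      have hprod := hd.2
      rw [h, Multiset.prod_zero] at hprod
      exact hm1 hprod.symm
    obtain ⟨x0, hx0⟩ := Multiset.exists_mem_of_ne_zero hd0
    have hne : (d + e).toFinset.Nonempty :=
      ⟨x0, Multiset.mem_toFinset.mpr (Multiset.mem_add.mpr (Or.inl hx0))⟩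
    obtain ⟨p, hpmem', hpmax0⟩ : ∃ p ∈ (d + e).toFinset, ∀ q ∈ (d + e).toFinset, ¬ p < q := by
      obtain ⟨p, hpM⟩ := Finset.exists_maximal hne
      exact ⟨p, hpM.1, fun q hq hlt => lt_irrefl p (lt_of_lt_of_le hlt (hpM.2 hq hlt.le))⟩
    have hpmem : p ∈ d + e := Multiset.mem_toFinset.mp hpmem'
    have hpmax : ∀ q ∈ d + e, ¬ p < q := fun q hq =>
      hpmax0 q (Multiset.mem_toFinset.mpr hq)
    have hp : Indec p := by
      rcases Multiset.mem_add.mp hpmem with h | h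
      exacts [hd.1 p h, he.1 p h]
    -- splitting off all copies of p from a decomposition
    have split : ∀ f : Multiset M, IsDecomp f m → (∀ q ∈ f, ¬ p < q) →
        m = p ^ (f.count p) * (f - Multiset.replicate (f.count p) p).prod ∧
        ¬ p ≤ (f - Multiset.replicate (f.count p) p).prod ∧
        f = Multiset.replicate (f.count p) p + (f - Multiset.replicate (f.count p) p) := by
      intro f hf hnlt
      have hrle : Multiset.replicate (f.count p) p ≤ f :=
        Multiset.le_count_iff_replicate_le.mp le_rfl
      have hfeq : Multiset.replicate (f.count p) p + (f - Multiset.replicate (f.count p) p) = f :=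
        add_tsub_cancel_of_le hrle
      have hcount0 : (f - Multiset.replicate (f.count p) p).count p = 0 := by
        rw [Multiset.count_sub, Multiset.count_replicate]
        simp
      have hnotmem : p ∉ f - Multiset.replicate (f.count p) p :=
        Multiset.count_eq_zero.mp hcount0
      have hnle : ¬ p ≤ (f - Multiset.replicate (f.count p) p).prod := by
        intro hle
        obtain ⟨q, hq, hpq⟩ := hmem_le p _ hp hle
        have hqf : q ∈ f := Multiset.mem_of_le tsub_le_self hq
        have hqne : p ≠ q := fun h => hnotmem (h ▸ hq)
        exact hnlt q hqf (lt_of_le_of_ne hpq hqne)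
      refine ⟨?_, hnle, hfeq.symm⟩
      calc m = f.prod := hf.2.symm
        _ = (Multiset.replicate (f.count p) p + (f - Multiset.replicate (f.count p) p)).prod := by
            rw [hfeq]
        _ = p ^ f.count p * (f - Multiset.replicate (f.count p) p).prod := by
            rw [Multiset.prod_add, Multiset.prod_replicate]
    -- counts of p in any two decompositions agree
    have nlt : ∀ f g : Multiset M, IsDecomp f m → IsDecomp g m →
        (∀ q ∈ f, ¬ p < q) → (∀ q ∈ g, ¬ p < q) → f.count p < g.count p → False := by
      intro f g hf hg hnf hng hab
      have hpb : p ^ g.count p ≤ m := by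
        calc p ^ g.count p = (Multiset.replicate (g.count p) p).prod :=
              (Multiset.prod_replicate _ _).symm
          _ ≤ g.prod := hprod_mono _ _ (Multiset.le_count_iff_replicate_le.mp le_rfl)
          _ = m := hg.2
      have hpa1 : p ^ (f.count p + 1) ≤ m :=
        le_trans (hpow_mono p _ _ (by omega)) hpb
      obtain ⟨hm_eq, hnle, -⟩ := split f hf hnf
      rcases eq_or_lt_of_le hpa1 with heqm | hltm
      · have hxp : p ^ f.count p * (f - Multiset.replicate (f.count p) p).prod
            = p ^ f.count p * p := by
          rw [← hm_eq, ← pow_succ]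
          exact heqm.symm
        have hres := hpc _ p p hp (fun h => hnle h.le) (lt_irrefl p) (f.count p) hxp
        exact hnle (by rw [hres])
      · have := K p hp f hf.1 hnf (f.count p + 1) (by rw [hf.2]; exact hpa1) hltm
        omega
    have hnf : ∀ q ∈ d, ¬ p < q := fun q hq => hpmax q (Multiset.mem_add.mpr (Or.inl hq))
    have hng : ∀ q ∈ e, ¬ p < q := fun q hq => hpmax q (Multiset.mem_add.mpr (Or.inr hq))
    have hab : d.count p = e.count p := by
      by_contra h
      rcases Nat.lt_or_ge (d.count p) (e.count p) with h1 | h1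
      · exact nlt d e hd he hnf hng h1
      · exact nlt e d he hd hng hnf (by omega)
    obtain ⟨hmd, hnled, hdeq⟩ := split d hd hnf
    obtain ⟨hme, hnlee, heeq⟩ := split e he hng
    have ha1 : 1 ≤ d.count p := by
      rcases Multiset.mem_add.mp hpmem with h | h
      · exact Multiset.count_pos.mpr h
      · rw [hab]; exact Multiset.count_pos.mpr h
    have hkey : p ^ d.count p * (d - Multiset.replicate (d.count p) p).prod
        = p ^ d.count p * (e - Multiset.replicate (e.count p) p).prod := by
      rw [← hmd, hab, ← hme]
    have hxy : (d - Multiset.replicate (d.count p) p).prod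
        = (e - Multiset.replicate (e.count p) p).prod :=
      hpc _ _ p hp (fun h => hnled h.le) (fun h => hnlee h.le) (d.count p) hkey
    -- the remaining product is strictly below m
    have hxm : (d - Multiset.replicate (d.count p) p).prod < m := by
      have hlex : (d - Multiset.replicate (d.count p) p).prod ≤ m := by
        rw [hmd]; exact hle_mul' _ _
      rcases eq_or_lt_of_le hlex with heqx | h
      · exfalso
        rw [heqx] at hmd
        have hiter : ∀ n : ℕ, m = (p ^ d.count p) ^ n * m := by
          intro n
          induction n with
          | zero => simp
          | succ n ih =>
            calc m = (p ^ d.count p) ^ n * m := ih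
              _ = (p ^ d.count p) ^ n * (p ^ d.count p * m) := by rw [← hmd]
              _ = (p ^ d.count p) ^ (n + 1) * m := by rw [pow_succ, mul_assoc]
        have hall : ∀ n : ℕ, p ^ n ≤ m := by
          intro n
          calc p ^ n ≤ p ^ (d.count p * n) :=
                hpow_mono p n (d.count p * n) (Nat.le_mul_of_pos_left n ha1)
            _ = (p ^ d.count p) ^ n := pow_mul p _ n
            _ ≤ (p ^ d.count p) ^ n * m := hle_mul _ _
            _ = m := (hiter n).symm
        exact hp.1 (harch p m hall)
      · exact h
    have hd0e0 : d - Multiset.replicate (d.count p) p = e - Multiset.replicate (e.count p) p := by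
      refine IH _ hxm _ _ ?_ ?_
      · exact ⟨fun q hq => hd.1 q (Multiset.mem_of_le tsub_le_self hq), rfl⟩
      · exact ⟨fun q hq => he.1 q (Multiset.mem_of_le tsub_le_self hq), hxy.symm⟩
    rw [hdeq, heeq, hd0e0, hab]
  intro m
  obtain ⟨d, hd⟩ := hex m
  exact ⟨d, hd, fun e he => main m e d he hd⟩
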